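/- Let D : ℝ^d → ℝ^d satisfy D(0) = 0 and |D(x)−D(y)| ≤ λ|x−y| with 0 < λ < 1, and let p ≥ 2. Suppose X : [−τ, T] → ℝ^d is a function with τ > 0, and set M(t) = sup_{0 ≤ s ≤ t} |X(s)|^p, K = sup_{−τ ≤ s ≤ 0} |X(s)|^p, and N(t) = sup_{0 ≤ s ≤ t} |X(s) − D(X(s−τ))|^p. Then for every t ∈ [0,T], M(t) ≤ (λ/(1−λ)) K + (1−λ)^{−p} N(t). -/
import Mathlib

lemma convex_split (lam p a b : ℝ) (hlam0 : 0 < lam) (hlam1 : lam < 1)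
    (hp : 1 ≤ p) (ha : 0 ≤ a) (hb : 0 ≤ b) :
    (lam * a + b) ^ p ≤ lam * a ^ p + (1 - lam) ^ (1 - p) * b ^ p := by
  have h1 : (0:ℝ) < 1 - lam := by linarith
  set v := b / (1 - lam) with hv
  have hv0 : 0 ≤ v := div_nonneg hb h1.le
  have key := (convexOn_rpow hp).2 (Set.mem_Ici.2 ha) (Set.mem_Ici.2 hv0)
    hlam0.le h1.le (by ring)
  simp only [smul_eq_mul] at key
  have hb' : lam * a + b = lam * a + (1 - lam) * v := by
    rw [hv, mul_div_cancel₀ _ h1.ne']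
  rw [hb']
  refine key.trans (le_of_eq ?_)
  have : v ^ p = b ^ p / (1 - lam) ^ p := Real.div_rpow hb h1.le p
  rw [this]
  rw [Real.rpow_sub h1, Real.rpow_one]
  field_simp

theorem stmt_11 (d : ℕ) (lam p τ T : ℝ) (hlam0 : 0 < lam) (hlam1 : lam < 1)
    (hp : 2 ≤ p) (hτ : 0 < τ)
    (D : EuclideanSpace ℝ (Fin d) → EuclideanSpace ℝ (Fin d))
    (hD0 : D 0 = 0) (hD : ∀ x y, ‖D x - D y‖ ≤ lam * ‖x - y‖)
    (X : ℝ → EuclideanSpace ℝ (Fin d))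
    (hbdd : BddAbove ((fun s => ‖X s‖) '' Set.Icc (-τ) T))
    (t : ℝ) (ht0 : 0 ≤ t) (htT : t ≤ T) :
    sSup ((fun s => ‖X s‖ ^ p) '' Set.Icc 0 t) ≤
      (lam / (1 - lam)) * sSup ((fun s => ‖X s‖ ^ p) '' Set.Icc (-τ) 0) +
        (1 - lam) ^ (-p) * sSup ((fun s => ‖X s - D (X (s - τ))‖ ^ p) '' Set.Icc 0 t) := by
  have h1 : (0:ℝ) < 1 - lam := by linarith
  have hp1 : (1:ℝ) ≤ p := by linarith
  have hp0 : (0:ℝ) ≤ p := by linarith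
  obtain ⟨C, hC⟩ := hbdd
  have hC' : ∀ s ∈ Set.Icc (-τ) T, ‖X s‖ ≤ C := fun s hs =>
    hC ⟨s, hs, rfl⟩
  have hC0 : 0 ≤ C := (norm_nonneg _).trans (hC' 0 ⟨by linarith, by linarith⟩)
  -- bounds for the three sups
  have hsub1 : Set.Icc (0:ℝ) t ⊆ Set.Icc (-τ) T := Set.Icc_subset_Icc (by linarith) htT
  have hsub2 : Set.Icc (-τ) (0:ℝ) ⊆ Set.Icc (-τ) T := Set.Icc_subset_Icc le_rfl (by linarith)
  have hMbdd : BddAbove ((fun s => ‖X s‖ ^ p) '' Set.Icc 0 t) := by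
    refine ⟨C ^ p, ?_⟩
    rintro _ ⟨s, hs, rfl⟩
    exact Real.rpow_le_rpow (norm_nonneg _) (hC' s (hsub1 hs)) hp0
  have hKbdd : BddAbove ((fun s => ‖X s‖ ^ p) '' Set.Icc (-τ) 0) := by
    refine ⟨C ^ p, ?_⟩
    rintro _ ⟨s, hs, rfl⟩
    exact Real.rpow_le_rpow (norm_nonneg _) (hC' s (hsub2 hs)) hp0
  have hNbdd : BddAbove ((fun s => ‖X s - D (X (s - τ))‖ ^ p) '' Set.Icc 0 t) := by
    refine ⟨((1 + lam) * C) ^ p, ?_⟩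
    rintro _ ⟨s, hs, rfl⟩
    have hs1 : s ∈ Set.Icc (-τ) T := hsub1 hs
    have hs2 : s - τ ∈ Set.Icc (-τ) T :=
      ⟨by have := hs.1; linarith, by have := hs.2; linarith⟩
    have hDX : ‖D (X (s - τ))‖ ≤ lam * ‖X (s - τ)‖ := by
      have := hD (X (s - τ)) 0
      simpa [hD0] using this
    refine Real.rpow_le_rpow (norm_nonneg _) ?_ hp0
    calc ‖X s - D (X (s - τ))‖ ≤ ‖X s‖ + ‖D (X (s - τ))‖ := norm_sub_le _ _
      _ ≤ C + lam * C := by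
          have := hC' s hs1
          have h2 := hC' (s - τ) hs2
          have := hDX.trans (by nlinarith : lam * ‖X (s - τ)‖ ≤ lam * C)
          linarith
      _ = (1 + lam) * C := by ring
  set M := sSup ((fun s => ‖X s‖ ^ p) '' Set.Icc 0 t) with hM
  set K := sSup ((fun s => ‖X s‖ ^ p) '' Set.Icc (-τ) 0) with hK
  set N := sSup ((fun s => ‖X s - D (X (s - τ))‖ ^ p) '' Set.Icc 0 t) with hN
  have hK0 : 0 ≤ K := le_csSup_of_le hKbdd ⟨0, ⟨by linarith, le_rfl⟩, rfl⟩
    (Real.rpow_nonneg (norm_nonneg _) p)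
  have hN0 : 0 ≤ N := le_csSup_of_le hNbdd ⟨0, ⟨le_rfl, ht0⟩, rfl⟩
    (Real.rpow_nonneg (norm_nonneg _) p)
  -- key: M ≤ lam * max K M + (1-lam)^(1-p) * N
  have hmain : M ≤ lam * max K M + (1 - lam) ^ (1 - p) * N := by
    refine csSup_le (Set.Nonempty.image _ (Set.nonempty_Icc.2 ht0)) ?_
    rintro _ ⟨s, hs, rfl⟩
    have hDX : ‖D (X (s - τ))‖ ≤ lam * ‖X (s - τ)‖ := by
      have := hD (X (s - τ)) 0
      simpa [hD0] using this
    have htri : ‖X s‖ ≤ lam * ‖X (s - τ)‖ + ‖X s - D (X (s - τ))‖ := by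
      calc ‖X s‖ = ‖D (X (s - τ)) + (X s - D (X (s - τ)))‖ := by
            rw [show D (X (s - τ)) + (X s - D (X (s - τ))) = X s by abel]
        _ ≤ ‖D (X (s - τ))‖ + ‖X s - D (X (s - τ))‖ := norm_add_le _ _
        _ ≤ _ := by linarith
    have step1 : ‖X s‖ ^ p ≤ (lam * ‖X (s - τ)‖ + ‖X s - D (X (s - τ))‖) ^ p :=
      Real.rpow_le_rpow (norm_nonneg _) htri hp0
    have step2 := convex_split lam p (‖X (s - τ)‖) (‖X s - D (X (s - τ))‖)
      hlam0 hlam1 hp1 (norm_nonneg _) (norm_nonneg _)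
    have hXa : ‖X (s - τ)‖ ^ p ≤ max K M := by
      rcases le_or_gt (s - τ) 0 with h | h
      · exact le_max_of_le_left (le_csSup hKbdd
          ⟨s - τ, ⟨by have := hs.1; linarith, h⟩, rfl⟩)
      · exact le_max_of_le_right (le_csSup hMbdd
          ⟨s - τ, ⟨h.le, by have := hs.2; linarith⟩, rfl⟩)
    have hXb : ‖X s - D (X (s - τ))‖ ^ p ≤ N := le_csSup hNbdd ⟨s, hs, rfl⟩
    have hc : (0:ℝ) ≤ (1 - lam) ^ (1 - p) := Real.rpow_nonneg h1.le _
    nlinarith [step1.trans step2]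
  have hpow : (1 - lam) ^ (1 - p) ≤ (1 - lam) ^ (-p) :=
    Real.rpow_le_rpow_of_exponent_ge h1 (by linarith) (by linarith)
  have hpow' : (1 - lam) ^ (1 - p) = (1 - lam) * (1 - lam) ^ (-p) := by
    rw [show (1 : ℝ) - p = 1 + (-p) by ring, Real.rpow_add h1, Real.rpow_one]
  have hnp : (0:ℝ) ≤ (1 - lam) ^ (-p) := Real.rpow_nonneg h1.le _
  rcases max_cases K M with ⟨hmax, hKM⟩ | ⟨hmax, hKM⟩
  · -- max = K
    rw [hmax] at hmain
    have h2 : lam * K ≤ lam / (1 - lam) * K := by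
      rw [div_mul_eq_mul_div, le_div_iff₀ h1]
      nlinarith [mul_nonneg (mul_nonneg hlam0.le hK0) hlam0.le]
    nlinarith [mul_le_mul_of_nonneg_right hpow hN0]
  · -- max = M
    rw [hmax, hpow'] at hmain
    have : (1 - lam) * M ≤ (1 - lam) * ((1 - lam) ^ (-p) * N) := by nlinarith
    have hMle : M ≤ (1 - lam) ^ (-p) * N := le_of_mul_le_mul_left this h1
    have : 0 ≤ lam / (1 - lam) * K :=
      mul_nonneg (div_nonneg hlam0.le h1.le) hK0
    linarith
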